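/- Let K₁ and K₂ be compact Hausdorff topological groups, and let h : K₁ → K₂ be a surjective group homomorphism (not assumed continuous) whose kernel is Gδ-dense in K₁. Then the graph Γ_h = {(x, h(x)) : x ∈ K₁} is a Gδ-dense subgroup of the product K₁ × K₂, and in particular Γ_h (with the subspace topology) is pseudocompact. -/

import Mathlib

/-- A topological space is *pseudocompact* if every continuous real-valued function
on it is bounded. -/
def Pseudocompact (X : Type*) [TopologicalSpace X] : Prop :=
  ∀ f : X → ℝ, Continuous f → ∃ M : ℝ, ∀ x : X, |f x| ≤ M

/-- A subset of a topological space is *Gδ-dense* if it meets every nonempty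
Gδ-subset. -/
def GdeltaDense {X : Type*} [TopologicalSpace X] (S : Set X) : Prop :=
  ∀ t : Set X, IsGδ t → t.Nonempty → (t ∩ S).Nonempty

/-- The graph of a group homomorphism, as a subgroup of the product. -/
def MonoidHom.graphSubgroup {K₁ K₂ : Type*} [Group K₁] [Group K₂] (h : K₁ →* K₂) :
    Subgroup (K₁ × K₂) where
  carrier := {p | p.2 = h p.1}
  one_mem' := by simp
  mul_mem' := by
    intro a b ha hb
    simp only [Set.mem_setOf_eq] at ha hb ⊢
    simp [Prod.snd_mul, Prod.fst_mul, ha, hb]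
  inv_mem' := by
    intro a ha
    simp only [Set.mem_setOf_eq] at ha ⊢
    simp [ha]

open Set Filter Topology Pointwise in
lemma my_isGδ_preimage {X Y : Type*} [TopologicalSpace X] [TopologicalSpace Y]
    {f : X → Y} (hf : Continuous f) {s : Set Y} (hs : IsGδ s) : IsGδ (f ⁻¹' s) := by
  obtain ⟨g, hg, rfl⟩ := isGδ_iff_eq_iInter_nat.1 hs
  rw [Set.preimage_iInter]
  exact .iInter_of_isOpen fun n => (hg n).preimage hf

open Set Filter Topology Pointwise

lemma closure_subset_mul_aux {K : Type*} [Group K] [TopologicalSpace K]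
    [IsTopologicalGroup K] (E U : Set K) (hU : IsOpen U) (h1 : (1:K) ∈ U) :
    closure E ⊆ E * U := by
  intro y hy
  have hyo : y ∈ y • U⁻¹ := ⟨1, by simpa using h1, by simp⟩
  obtain ⟨e, heo, heE⟩ := (mem_closure_iff.1 hy) (y • U⁻¹) (hU.inv.smul y) hyo
  obtain ⟨v, hv, rfl⟩ := heo
  have hv' : v⁻¹ ∈ U := Set.mem_inv.1 hv
  have : y = (y • v) * v⁻¹ := by simp [smul_eq_mul]
  rw [this]
  exact Set.mul_mem_mul heE hv'

theorem gdelta_dense_pseudocompact {K : Type*} [Group K] [TopologicalSpace K]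
    [IsTopologicalGroup K] [CompactSpace K] [T2Space K]
    {S : Set K} (hS : GdeltaDense S) : Pseudocompact S := by
  intro f hf
  by_contra hb
  push_neg at hb
  have hdense : ∀ U : Set K, IsOpen U → U.Nonempty → (U ∩ S).Nonempty :=
    fun U hU hne => hS U hU.isGδ hne
  -- points with large values
  have hx : ∀ m : ℕ, ∃ p : S, (m : ℝ) + 1 < |f p| := fun m => hb ((m:ℝ)+1)
  choose x hxf using hx
  -- continuity balls in K
  have hcont : ∀ (p : S) (ε : ℝ), 0 < ε → ∃ U : Set K, IsOpen U ∧ (p:K) ∈ U ∧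
      ∀ y (hy : y ∈ S), y ∈ U → |f ⟨y,hy⟩ - f p| < ε := by
    intro p ε hε
    have h1 : Continuous fun y : S => |f y - f p| := (hf.sub continuous_const).abs
    have h2 : IsOpen {y : S | |f y - f p| < ε} := isOpen_lt h1 continuous_const
    obtain ⟨U, hUo, hU⟩ := isOpen_induced_iff.1 h2
    refine ⟨U, hUo, ?_, ?_⟩
    · have hp : p ∈ {y : S | |f y - f p| < ε} := by simp [hε]
      rw [← hU] at hp; exact hp
    · intro y hy hyU
      have : (⟨y, hy⟩ : S) ∈ Subtype.val ⁻¹' U := hyU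
      rw [hU] at this; exact this
  choose U hUo hUx hUf using fun m => hcont (x m) 1 one_pos
  -- trace property
  have htrace : ∀ m, ∀ y (hy : y ∈ S), y ∈ U m → (m:ℝ) < |f ⟨y,hy⟩| := by
    intro m y hy hyU
    have h1 := hUf m y hy hyU
    have h2 := hxf m
    have h3 := abs_sub_abs_le_abs_sub (f (x m)) (f ⟨y,hy⟩)
    rw [abs_sub_comm (f ⟨y,hy⟩)] at h1
    linarith
  -- V m : translated balls at 1
  set V : ℕ → Set K := fun m => (x m : K)⁻¹ • U m with hVdef
  have hVo : ∀ m, IsOpen (V m) := fun m => (hUo m).smul _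
  have hV1 : ∀ m, (1:K) ∈ V m := by
    intro m
    rw [hVdef]
    rw [Set.mem_smul_set_iff_inv_smul_mem]
    simpa using hUx m
  have hVU : ∀ m, ∀ y ∈ V m, (x m : K) * y ∈ U m := by
    intro m y hy
    obtain ⟨u, hu, rfl⟩ := hy
    simpa [smul_eq_mul, mul_assoc] using hu
  -- W m : half balls
  have hW : ∀ m, ∃ B : Set K, IsOpen B ∧ (1:K) ∈ B ∧ B * B ⊆ V m := fun m =>
    exists_open_nhds_one_mul_subset ((hVo m).mem_nhds (hV1 m))
  choose W hWo hW1 hWV using hW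
  -- P sequence
  have hex : ∀ A : Set K, ∃ B : Set K, IsOpen A → (1:K) ∈ A →
      IsOpen B ∧ (1:K) ∈ B ∧ B * B ⊆ A := by
    intro A
    by_cases h : IsOpen A ∧ (1:K) ∈ A
    · obtain ⟨B, h1, h2, h3⟩ := exists_open_nhds_one_mul_subset (h.1.mem_nhds h.2)
      exact ⟨B, fun _ _ => ⟨h1, h2, h3⟩⟩
    · exact ⟨∅, fun hA h1 => absurd ⟨hA, h1⟩ h⟩
  choose g hg using hex
  set P : ℕ → Set K := fun k => Nat.rec Set.univ (fun k Pk => g (Pk ∩ W k)) k with hPdef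
  have hPsucc : ∀ k, P (k+1) = g (P k ∩ W k) := fun k => rfl
  have hPo : ∀ k, IsOpen (P k) ∧ (1:K) ∈ P k := by
    intro k
    induction k with
    | zero => exact ⟨isOpen_univ, mem_univ 1⟩
    | succ k ih =>
      rw [hPsucc]
      have h := hg (P k ∩ W k) (ih.1.inter (hWo k)) ⟨ih.2, hW1 k⟩
      exact ⟨h.1, h.2.1⟩
  have hPs : ∀ k, P (k+1) * P (k+1) ⊆ P k ∩ W k := by
    intro k
    rw [hPsucc]
    exact (hg (P k ∩ W k) ((hPo k).1.inter (hWo k)) ⟨(hPo k).2, hW1 k⟩).2.2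
  have hPsq : ∀ k, P (k+1) ⊆ P k ∩ W k := by
    intro k y hy
    have : y * 1 ∈ P (k+1) * P (k+1) := Set.mul_mem_mul hy (hPo (k+1)).2
    rw [mul_one] at this
    exact hPs k this
  -- the Gδ "subgroup-like" set N
  set N : Set K := ⋂ k, P k with hNdef
  have hN1 : (1:K) ∈ N := mem_iInter.2 fun k => (hPo k).2
  have hNN : ∀ a ∈ N, ∀ b ∈ N, a * b ∈ N := by
    intro a ha b hb
    rw [hNdef, mem_iInter]
    intro k
    have ha' : a ∈ P (k+1) := mem_iInter.1 ha (k+1)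
    have hb' : b ∈ P (k+1) := mem_iInter.1 hb (k+1)
    exact (hPs k (Set.mul_mem_mul ha' hb')).1
  have hNW : ∀ k, N ⊆ W k := fun k =>
    (iInter_subset P (k+1)).trans ((hPsq k).trans inter_subset_right)
  -- the sets E n
  set E : ℕ → Set K := fun n => ⋃ m, ⋃ (_ : n ≤ m), {(x m : K)} * (W m * N) with hEdef
  have hEne : ∀ n, (E n).Nonempty := by
    intro n
    refine ⟨x n, mem_iUnion.2 ⟨n, mem_iUnion.2 ⟨le_refl n, ?_⟩⟩⟩
    have : (x n : K) * (1 * 1) ∈ {(x n : K)} * (W n * N) :=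
      Set.mul_mem_mul rfl (Set.mul_mem_mul (hW1 n) hN1)
    simpa using this
  have hEdec : ∀ n, E (n+1) ⊆ E n := by
    intro n y hy
    obtain ⟨m, hm⟩ := mem_iUnion.1 hy
    obtain ⟨hle, hy'⟩ := mem_iUnion.1 hm
    exact mem_iUnion.2 ⟨m, mem_iUnion.2 ⟨le_trans (Nat.le_succ n) hle, hy'⟩⟩
  have hEN : ∀ n, E n * N ⊆ E n := by
    intro n y hy
    obtain ⟨e, he, ν, hν, rfl⟩ := hy
    obtain ⟨m, hm⟩ := mem_iUnion.1 he
    obtain ⟨hle, he'⟩ := mem_iUnion.1 hm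
    obtain ⟨a, ha, b, hb, rfl⟩ := he'
    obtain ⟨w, hw, ν', hν', rfl⟩ := hb
    refine mem_iUnion.2 ⟨m, mem_iUnion.2 ⟨hle, ?_⟩⟩
    have : a * (w * (ν' * ν)) ∈ {(x m : K)} * (W m * N) :=
      Set.mul_mem_mul ha (Set.mul_mem_mul hw (hNN ν' hν' ν hν))
    simpa [mul_assoc] using this
  -- E n ⊆ union of U m traces, pointwise
  have hEU : ∀ n, ∀ z ∈ E n, ∃ m, n ≤ m ∧ z ∈ U m := by
    intro n z hz
    obtain ⟨m, hm⟩ := mem_iUnion.1 hz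
    obtain ⟨hle, hz'⟩ := mem_iUnion.1 hm
    obtain ⟨a, ha, b, hb, rfl⟩ := hz'
    obtain ⟨w, hw, ν, hν, rfl⟩ := hb
    rw [Set.mem_singleton_iff] at ha
    subst ha
    refine ⟨m, hle, ?_⟩
    exact hVU m _ (hWV m (Set.mul_mem_mul hw (hNW m hν)))
  -- closure (E n) = ⋂ k, E n * P k
  have hclE : ∀ n, closure (E n) = ⋂ k, E n * P k := by
    intro n
    apply Subset.antisymm
    · exact subset_iInter fun k =>
        closure_subset_mul_aux (E n) (P k) (hPo k).1 (hPo k).2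
    · intro z hz
      set Z : ℕ → Set K := fun k => closure (E n) ∩ z • (closure (P k))⁻¹ with hZdef
      have hZne : ∀ k, (Z k).Nonempty := by
        intro k
        obtain ⟨e, he, p, hp, rfl⟩ := mem_iInter.1 hz k
        refine ⟨e, subset_closure he, ?_⟩
        refine ⟨p⁻¹, ?_, by simp [smul_eq_mul, mul_assoc]⟩
        rw [Set.mem_inv, inv_inv]
        exact subset_closure hp
      have hZdec : ∀ k, Z (k+1) ⊆ Z k := by
        intro k
        apply inter_subset_inter_right
        apply Set.smul_set_mono
        apply Set.inv_subset_inv.2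
        exact closure_mono ((hPsq k).trans inter_subset_left)
      have hZcl : ∀ k, IsClosed (Z k) := fun k =>
        isClosed_closure.inter ((isClosed_closure.inv).smul z)
      obtain ⟨e, he⟩ := IsCompact.nonempty_iInter_of_sequence_nonempty_isCompact_isClosed
        Z hZdec hZne ((hZcl 0).isCompact) hZcl
      have heE : e ∈ closure (E n) := (mem_iInter.1 he 0).1
      have hν : e⁻¹ * z ∈ N := by
        rw [hNdef, mem_iInter]
        intro k
        have h1 : e ∈ z • (closure (P (k+1)))⁻¹ := (mem_iInter.1 he (k+1)).2
        obtain ⟨v, hv, rfl⟩ := h1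
        rw [Set.mem_inv] at hv
        have hcl : closure (P (k+1)) ⊆ P k := by
          refine (closure_subset_mul_aux _ _ (hPo (k+1)).1 (hPo (k+1)).2).trans ?_
          exact (hPs k).trans inter_subset_left
        have : (z • v)⁻¹ * z = v⁻¹ := by simp [smul_eq_mul, mul_assoc]
        rw [this]
        exact hcl hv
      have hz' := map_mem_closure (f := fun b : K => b * (e⁻¹ * z))
        (continuous_mul_right _) heE
        (fun a ha => hEN n (Set.mul_mem_mul ha hν))
      simpa [mul_assoc] using hz'
  -- the Gδ set
  have hGδ : IsGδ (⋂ n, closure (E n)) := by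
    have : (⋂ n, closure (E n)) = ⋂ n, ⋂ k, E n * P k := by
      exact iInter_congr hclE
    rw [this]
    exact .iInter fun n => .iInter fun k => ((hPo k).1.mul_left).isGδ
  have hne : (⋂ n, closure (E n)).Nonempty := by
    apply IsCompact.nonempty_iInter_of_sequence_nonempty_isCompact_isClosed
    · exact fun n => closure_mono (hEdec n)
    · exact fun n => (hEne n).closure
    · exact isClosed_closure.isCompact
    · exact fun n => isClosed_closure
  obtain ⟨q, hqE, hqS⟩ := hS _ hGδ hne
  -- final contradiction
  obtain ⟨Uq, hUqo, hUqx, hUqf⟩ := hcont ⟨q, hqS⟩ 1 one_pos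
  obtain ⟨n, hn⟩ := exists_nat_gt (|f ⟨q, hqS⟩| + 1)
  have hq : q ∈ closure (E n) := mem_iInter.1 hqE n
  obtain ⟨z, hzU, hzE⟩ := (mem_closure_iff.1 hq) Uq hUqo hUqx
  obtain ⟨m, hnm, hzUm⟩ := hEU n z hzE
  obtain ⟨s, ⟨hsUq, hsUm⟩, hsS⟩ :=
    hdense (Uq ∩ U m) (hUqo.inter (hUo m)) ⟨z, hzU, hzUm⟩
  have h1 : (m:ℝ) < |f ⟨s, hsS⟩| := htrace m s hsS hsUm
  have h2 : |f ⟨s, hsS⟩ - f ⟨q, hqS⟩| < 1 := hUqf s hsS hsUq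
  have h3 := abs_sub_abs_le_abs_sub (f ⟨s, hsS⟩) (f ⟨q, hqS⟩)
  have h4 : (n:ℝ) ≤ (m:ℝ) := Nat.cast_le.2 hnm
  linarith

/-- if `K₁`, `K₂` are compact Hausdorff topological groups and
`h : K₁ → K₂` is a surjective (not necessarily continuous) homomorphism whose kernel is
Gδ-dense in `K₁`, then the graph of `h` is a Gδ-dense subgroup of `K₁ × K₂`; in
particular the graph is pseudocompact in the subspace topology. -/
theorem graph_GdeltaDense_and_pseudocompact {K₁ K₂ : Type*}
    [Group K₁] [TopologicalSpace K₁] [IsTopologicalGroup K₁] [CompactSpace K₁] [T2Space K₁]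
    [Group K₂] [TopologicalSpace K₂] [IsTopologicalGroup K₂] [CompactSpace K₂] [T2Space K₂]
    (h : K₁ →* K₂) (hsurj : Function.Surjective h)
    (hker : GdeltaDense (h.ker : Set K₁)) :
    GdeltaDense (h.graphSubgroup : Set (K₁ × K₂)) ∧
      Pseudocompact h.graphSubgroup := by
  have hgraph : GdeltaDense (h.graphSubgroup : Set (K₁ × K₂)) := by
    intro t ht hne
    obtain ⟨⟨a, b⟩, hab⟩ := hne
    obtain ⟨c, hc⟩ := hsurj b
    set φ : K₁ → K₁ × K₂ := fun x => (x * c, b) with hφ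
    have hφc : Continuous φ := (continuous_mul_right c).prodMk continuous_const
    have hsGδ : IsGδ (φ ⁻¹' t) := my_isGδ_preimage hφc ht
    have hsne : (φ ⁻¹' t).Nonempty := by
      refine ⟨a * c⁻¹, ?_⟩
      show φ (a * c⁻¹) ∈ t
      simpa [hφ] using hab
    obtain ⟨n, hnt, hnker⟩ := hker _ hsGδ hsne
    refine ⟨φ n, hnt, ?_⟩
    have hn1 : h n = 1 := MonoidHom.mem_ker.1 hnker
    show b = h (n * c)
    rw [map_mul, hn1, one_mul, hc]
  refine ⟨hgraph, ?_⟩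
  exact gdelta_dense_pseudocompact (K := K₁ × K₂) hgraph
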